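/- (Proposition 4.7, velocity Reynolds identity) Let L > 0, let v₀(t,x) = (L²e^{2Lt}/(2π)^{3/2})·(sin x₃, 0, 0) and Ξ₀(t,x) = (L²e^{2Lt}/(2π)³)·(sin x₃, cos x₃, 0), and define the matrix field M_v(t,x) = (2L³e^{2Lt}/(2π)^{3/2})·M(x₃), where M(x₃) is the 3×3 matrix whose (1,3) and (3,1) entries equal −cos x₃ and all other entries vanish. Then M_v(t,x) is symmetric and trace-free for every (t,x); moreover div(v₀ ⊗ v₀)(t,x) = 0 and div(Ξ₀ ⊗ Ξ₀)(t,x) = 0 for all (t,x), and ∂_t v₀ + div(v₀ ⊗ v₀ − Ξ₀ ⊗ Ξ₀) = div M_v everywhere. -/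

import Mathlib

open scoped Matrix

/-- Outer product of two vectors in ℝ³: `(u ⊗ w)ᵢⱼ = uᵢ wⱼ`. -/
def outer (u w : Fin 3 → ℝ) : Matrix (Fin 3) (Fin 3) ℝ := fun i j => u i * w j

/-- Divergence of a matrix-valued field: `(div M)ᵢ = ∑ⱼ ∂ⱼ Mᵢⱼ`. -/
noncomputable def divMat (M : (Fin 3 → ℝ) → Matrix (Fin 3) (Fin 3) ℝ)
    (x : Fin 3 → ℝ) (i : Fin 3) : ℝ :=
  ∑ j, fderiv ℝ (fun y => M y i j) x (Pi.single j 1)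

/-- The initial velocity field `v₀(t,x) = (L²e^{2Lt}/(2π)^{3/2})·(sin x₃, 0, 0)`. -/
noncomputable def v0 (L t : ℝ) (x : Fin 3 → ℝ) : Fin 3 → ℝ :=
  ![L ^ 2 * Real.exp (2 * L * t) / (2 * Real.pi) ^ ((3 : ℝ) / 2) * Real.sin (x 2), 0, 0]

/-- The initial magnetic field `Ξ₀(t,x) = (L²e^{2Lt}/(2π)³)·(sin x₃, cos x₃, 0)`. -/
noncomputable def Xi0 (L t : ℝ) (x : Fin 3 → ℝ) : Fin 3 → ℝ :=
  ![L ^ 2 * Real.exp (2 * L * t) / (2 * Real.pi) ^ (3 : ℕ) * Real.sin (x 2),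
    L ^ 2 * Real.exp (2 * L * t) / (2 * Real.pi) ^ (3 : ℕ) * Real.cos (x 2), 0]

/-- The explicit velocity Reynolds stress
`M_v(t,x) = (2L³e^{2Lt}/(2π)^{3/2})·M(x₃)` with `M(x₃)₁₃ = M(x₃)₃₁ = −cos x₃`, other entries 0. -/
noncomputable def Mv (L t : ℝ) (x : Fin 3 → ℝ) : Matrix (Fin 3) (Fin 3) ℝ :=
  (2 * L ^ 3 * Real.exp (2 * L * t) / (2 * Real.pi) ^ ((3 : ℝ) / 2)) •
    !![0, 0, -Real.cos (x 2); 0, 0, 0; -Real.cos (x 2), 0, 0]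

lemma fd_aux (f : ℝ → ℝ) (f' : ℝ) (x : Fin 3 → ℝ) (hf : HasDerivAt f f' (x 2)) (j : Fin 3) :
    fderiv ℝ (fun y : Fin 3 → ℝ => f (y 2)) x (Pi.single j 1) =
      f' * (Pi.single j 1 : Fin 3 → ℝ) 2 := by
  have h := hf.comp_hasFDerivAt x
    ((ContinuousLinearMap.proj 2 : (Fin 3 → ℝ) →L[ℝ] ℝ).hasFDerivAt)
  rw [show (fun y : Fin 3 → ℝ => f (y 2)) = f ∘ (ContinuousLinearMap.proj 2 :
      (Fin 3 → ℝ) →L[ℝ] ℝ) from rfl, h.fderiv]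
  simp [smul_eq_mul]

/-- **Proposition 4.7 (velocity Reynolds identity).** `M_v` is symmetric and trace-free,
`div(v₀ ⊗ v₀) = 0`, `div(Ξ₀ ⊗ Ξ₀) = 0`, and
`∂_t v₀ + div(v₀ ⊗ v₀ − Ξ₀ ⊗ Ξ₀) = div M_v` everywhere. -/
theorem prop47_velocity_reynolds (L : ℝ) (hL : 0 < L) :
    (∀ (t : ℝ) (x : Fin 3 → ℝ), (Mv L t x)ᵀ = Mv L t x ∧ Matrix.trace (Mv L t x) = 0) ∧
    (∀ (t : ℝ) (x : Fin 3 → ℝ) (i : Fin 3),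
      divMat (fun y => outer (v0 L t y) (v0 L t y)) x i = 0) ∧
    (∀ (t : ℝ) (x : Fin 3 → ℝ) (i : Fin 3),
      divMat (fun y => outer (Xi0 L t y) (Xi0 L t y)) x i = 0) ∧
    (∀ (t : ℝ) (x : Fin 3 → ℝ) (i : Fin 3),
      deriv (fun s => v0 L s x i) t +
        divMat (fun y => outer (v0 L t y) (v0 L t y) - outer (Xi0 L t y) (Xi0 L t y)) x i =
      divMat (fun y => Mv L t y) x i) := by
  refine ⟨fun t x => ⟨?_, ?_⟩, fun t x i => ?_, fun t x i => ?_, fun t x i => ?_⟩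
  · ext i j; fin_cases i <;> fin_cases j <;> simp [Mv, Matrix.vecHead, Matrix.vecTail]
  · simp [Mv, Matrix.trace, Fin.sum_univ_three, Matrix.vecHead, Matrix.vecTail]
  · simp only [divMat, outer, v0, Fin.sum_univ_three]
    fin_cases i <;> simp
    rw [fd_aux (fun s => L ^ 2 * Real.exp (2 * L * t) / (2 * Real.pi) ^ ((3:ℝ) / 2) * Real.sin s *
          (L ^ 2 * Real.exp (2 * L * t) / (2 * Real.pi) ^ ((3:ℝ) / 2) * Real.sin s)) _ x
        (((Real.hasDerivAt_sin (x 2)).const_mul _).mul ((Real.hasDerivAt_sin (x 2)).const_mul _))]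
    simp [Pi.single_apply]

  · have hs := (Real.hasDerivAt_sin (x 2)).const_mul
      (L ^ 2 * Real.exp (2 * L * t) / (2 * Real.pi) ^ (3 : ℕ))
    have hc := (Real.hasDerivAt_cos (x 2)).const_mul
      (L ^ 2 * Real.exp (2 * L * t) / (2 * Real.pi) ^ (3 : ℕ))
    simp only [divMat, outer, Xi0, Fin.sum_univ_three]
    fin_cases i <;> simp
    · erw [fd_aux _ _ x (hs.mul hs) 0, fd_aux _ _ x (hs.mul hc) 1]
      simp [Pi.single_apply]
    · erw [fd_aux _ _ x (hc.mul hs) 0, fd_aux _ _ x (hc.mul hc) 1]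
      simp [Pi.single_apply]
  · simp only [divMat, outer, v0, Xi0, Mv, Matrix.sub_apply, Matrix.smul_apply, Fin.sum_univ_three]
    have h2L : HasDerivAt (fun s : ℝ => 2 * L * s) (2 * L) t := by
      simpa using (hasDerivAt_id t).const_mul (2 * L)
    have hexp := h2L.exp
    have hsA := (Real.hasDerivAt_sin (x 2)).const_mul
      (L ^ 2 * Real.exp (2 * L * t) / (2 * Real.pi) ^ ((3 : ℝ) / 2))
    have hsB := (Real.hasDerivAt_sin (x 2)).const_mul
      (L ^ 2 * Real.exp (2 * L * t) / (2 * Real.pi) ^ (3 : ℕ))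
    have hcB := (Real.hasDerivAt_cos (x 2)).const_mul
      (L ^ 2 * Real.exp (2 * L * t) / (2 * Real.pi) ^ (3 : ℕ))
    have hcC := (Real.hasDerivAt_cos (x 2)).const_mul
      (2 * L ^ 3 * Real.exp (2 * L * t) / (2 * Real.pi) ^ ((3 : ℝ) / 2))
    fin_cases i <;> simp
    · erw [hexp.deriv, fd_aux _ _ x ((hsA.mul hsA).sub (hsB.mul hsB)) 0,
        fd_aux _ _ x (hsB.mul hcB) 1, fd_aux _ _ x hcC 2]
      simp [Pi.single_apply]
      left; ring
    · erw [fd_aux _ _ x (hcB.mul hsB) 0, fd_aux _ _ x (hcB.mul hcB) 1]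
      simp [Pi.single_apply]
    · rw [fd_aux _ _ x hcC 0]
      simp [Pi.single_apply]
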